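/- Let $H \in \mathbb{C}^{js\times js}$ be block upper Hessenberg with invertible subdiagonal blocks $\Gamma_2,\ldots,\Gamma_j$, diagonalizable with simple eigenvalues, let $R_B \in \mathbb{C}^{s\times s}$ be invertible, and let $\Lambda(z)$ be the monic block characteristic polynomial of $H$ with respect to $E_1 R_B$. Then for every $z$ not an eigenvalue of $H$: $\Lambda(z)^{-1} = R_B^{-1}\,\Gamma_2^{-1}\cdots\Gamma_j^{-1}\, E_j^* (zI - H)^{-1} E_1\, R_B$. -/

import Mathlib

open Matrix Polynomial

abbrev Mat (s : ℕ) := Matrix (Fin s) (Fin s) ℂ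

/-- The `(p,q)` block (of size `s × s`) of a `js × js` block matrix. -/
def blk {j s : ℕ} (H : Matrix (Fin j × Fin s) (Fin j × Fin s) ℂ) (p q : Fin j) :
    Mat s := Matrix.of fun a b => H (p, a) (q, b)

/-- The `i`-th block canonical vector `E_i = e_i ⊗ I_s`. -/
def blkE {j s : ℕ} (i : Fin j) : Matrix (Fin j × Fin s) (Fin s) ℂ :=
  Matrix.of fun pa b => if pa.1 = i ∧ pa.2 = b then 1 else 0

/-- Block upper Hessenberg: all blocks strictly below the first subdiagonal vanish. -/
def BUH {j s : ℕ} (H : Matrix (Fin j × Fin s) (Fin j × Fin s) ℂ) : Prop :=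
  ∀ p q : Fin j, (q : ℕ) + 1 < (p : ℕ) → blk H p q = 0

/-- The action `P(N) ∘ W := ∑ᵢ Nⁱ W Pᵢ` of a matrix polynomial on a block vector. -/
noncomputable def act {n : Type*} [Fintype n] [DecidableEq n] {s : ℕ}
    (P : Polynomial (Mat s)) (N : Matrix n n ℂ) (W : Matrix n (Fin s) ℂ) :
    Matrix n (Fin s) ℂ :=
  ∑ i ∈ Finset.range (P.natDegree + 1), (N ^ i) * W * P.coeff i

/-- Evaluation of a matrix polynomial at a scalar: `P(z) = ∑ᵢ zⁱ Pᵢ`. -/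
noncomputable def evalS {s : ℕ} (P : Polynomial (Mat s)) (z : ℂ) : Mat s :=
  ∑ i ∈ Finset.range (P.natDegree + 1), z ^ i • P.coeff i

/-- The subdiagonal block `Γ_i = H_{(i-1)(i-2)}` (paper indexing, `2 ≤ i ≤ j`),
with the convention `Γ_i = I` out of range (in particular `Γ₁ = I`). -/
noncomputable def Gam {j s : ℕ} (H : Matrix (Fin j × Fin s) (Fin j × Fin s) ℂ)
    (i : ℕ) : Mat s :=
  if h : 2 ≤ i ∧ i ≤ j then blk H ⟨i - 1, by omega⟩ ⟨i - 2, by omega⟩ else 1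

section aux
variable {j s : ℕ}

lemma blk_mul (M N : Matrix (Fin j × Fin s) (Fin j × Fin s) ℂ) (p q : Fin j) :
    blk (M * N) p q = ∑ r : Fin j, blk M p r * blk N r q := by
  ext a b
  simp [blk, Matrix.mul_apply, Finset.sum_apply, Fintype.sum_prod_type, Matrix.sum_apply]

lemma blk_one_off (p q : Fin j) (h : p ≠ q) :
    blk (1 : Matrix (Fin j × Fin s) (Fin j × Fin s) ℂ) p q = 0 := by
  ext a b
  simp [blk, Matrix.one_apply, Prod.ext_iff]
  tauto

lemma blk_one_diag (p : Fin j) :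
    blk (1 : Matrix (Fin j × Fin s) (Fin j × Fin s) ℂ) p p = 1 := by
  ext a b
  simp [blk, Matrix.one_apply, Prod.ext_iff]

lemma blkE_conjT_mul_mul {j s : ℕ} (M : Matrix (Fin j × Fin s) (Fin j × Fin s) ℂ) (i i' : Fin j) :
    (blkE (s := s) i)ᴴ * M * blkE (s := s) i' = blk M i i' := by
  ext a b
  simp [blkE, blk, Matrix.mul_apply, Fintype.sum_prod_type, conjTranspose_apply,
    apply_ite (star : ℂ → ℂ), ite_and]

lemma buh_pow_blk_eq_zero {H : Matrix (Fin j × Fin s) (Fin j × Fin s) ℂ} (hH : BUH H) :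
    ∀ (k : ℕ) (p q : Fin j), (q : ℕ) + k < (p : ℕ) → blk (H ^ k) p q = 0 := by
  intro k
  induction k with
  | zero =>
    intro p q h
    rw [pow_zero]
    exact blk_one_off p q (Fin.ne_of_val_ne (by omega))
  | succ k ih =>
    intro p q h
    rw [pow_succ, blk_mul]
    apply Finset.sum_eq_zero
    intro r _
    by_cases hr : (q : ℕ) + 1 < (r : ℕ)
    · rw [hH r q hr, mul_zero]
    · rw [ih p r (by omega), zero_mul]

noncomputable def Gprod {j s : ℕ} (H : Matrix (Fin j × Fin s) (Fin j × Fin s) ℂ) :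
    ℕ → Mat s
  | 0 => 1
  | (k+1) => Gam H (k + 2) * Gprod H k

lemma blk_pow_diag {H : Matrix (Fin j × Fin s) (Fin j × Fin s) ℂ} (hH : BUH H) :
    ∀ (k : ℕ) (hk : k < j),
      blk (H ^ k) ⟨k, hk⟩ ⟨0, by omega⟩ = Gprod H k := by
  intro k
  induction k with
  | zero => intro hk; rw [pow_zero]; exact blk_one_diag _
  | succ k ih =>
    intro hk
    rw [pow_succ', blk_mul]
    rw [Finset.sum_eq_single (⟨k, by omega⟩ : Fin j)]
    · rw [ih (by omega)]
      have : blk H ⟨k+1, hk⟩ ⟨k, by omega⟩ = Gam H (k + 2) := by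
        rw [Gam, dif_pos ⟨by omega, by omega⟩]
        congr 1
      rw [this, Gprod]
    · intro r _ hr
      have hrk : (r : ℕ) ≠ k := fun h' => hr (Fin.ext h')
      by_cases hlt : (r : ℕ) < k
      · have h0 : (r : ℕ) + 1 < ((⟨k+1, hk⟩ : Fin j) : ℕ) := by simp; omega
        rw [hH ⟨k+1, hk⟩ r h0, zero_mul]
      · have h0 : ((⟨0, by omega⟩ : Fin j) : ℕ) + k < (r : ℕ) := by simp; omega
        rw [buh_pow_blk_eq_zero hH k r ⟨0, by omega⟩ h0, mul_zero]
    · intro h; exact absurd (Finset.mem_univ _) h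

lemma Pk_mul_Gprod {H : Matrix (Fin j × Fin s) (Fin j × Fin s) ℂ}
    (hinv : ∀ i : ℕ, 2 ≤ i → i ≤ j → IsUnit (Gam H i)) :
    ∀ k, k + 1 ≤ j →
      ((List.range k).map (fun m => (Gam H (m + 2))⁻¹)).prod * Gprod H k = 1 := by
  intro k
  induction k with
  | zero => intro _; simp [Gprod]
  | succ k ih =>
    intro hk
    rw [List.range_succ, List.map_append, List.prod_append]
    simp only [List.map_cons, List.map_nil, List.prod_cons, List.prod_nil, mul_one]
    rw [Gprod, mul_assoc, ← mul_assoc ((Gam H (k+2))⁻¹),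
      Matrix.nonsing_inv_mul _ ((Matrix.isUnit_iff_isUnit_det _).mp (hinv (k+2) (by omega) (by omega))),
      one_mul, ih (by omega)]

end aux

/-- Keldysh-type formula for the inverse of the monic block
characteristic polynomial of a diagonalizable block upper Hessenberg matrix with
simple eigenvalues: `Λ(z)⁻¹ = R_B⁻¹ Γ₂⁻¹⋯Γⱼ⁻¹ Eⱼ* (zI − H)⁻¹ E₁ R_B`. -/
theorem monic_char_poly_inverse {j s : ℕ} (hj : 0 < j)
    (H : Matrix (Fin j × Fin s) (Fin j × Fin s) ℂ) (hH : BUH H)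
    (hinv : ∀ i : ℕ, 2 ≤ i → i ≤ j → IsUnit (Gam H i))
    (hsimple : ∀ θ : ℂ, (Matrix.charpoly H).rootMultiplicity θ ≤ 1)
    (hdiag : ∃ (X : Matrix (Fin j × Fin s) (Fin j × Fin s) ℂ)
        (d : Fin j × Fin s → ℂ), IsUnit X ∧ H = X * Matrix.diagonal d * X⁻¹)
    (RB : Mat s) (hRB : IsUnit RB)
    (Λ : Polynomial (Mat s)) (hmonic : Λ.Monic) (hdeg : Λ.natDegree = j)
    (hann : act Λ H (blkE (⟨0, hj⟩ : Fin j) * RB) = 0)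
    (z : ℂ)
    (hz : (z • (1 : Matrix (Fin j × Fin s) (Fin j × Fin s) ℂ) - H).det ≠ 0) :
    (evalS Λ z)⁻¹ =
      RB⁻¹ * ((List.range (j - 1)).map (fun m => (Gam H (m + 2))⁻¹)).prod *
        ((blkE (s := s) (⟨j - 1, by omega⟩ : Fin j))ᴴ * (z • 1 - H)⁻¹ *
          blkE (⟨0, hj⟩ : Fin j)) * RB := by
  set E0 : Matrix (Fin j × Fin s) (Fin s) ℂ := blkE (⟨0, hj⟩ : Fin j) with hE0
  set Ej : Matrix (Fin j × Fin s) (Fin s) ℂ := blkE (⟨j - 1, by omega⟩ : Fin j) with hEj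
  set M : Matrix (Fin j × Fin s) (Fin j × Fin s) ℂ := z • 1 - H with hM
  set W : Matrix (Fin j × Fin s) (Fin s) ℂ := E0 * RB with hW
  set S : ℕ → Matrix (Fin j × Fin s) (Fin j × Fin s) ℂ :=
    fun i => ∑ m ∈ Finset.range i, z ^ m • H ^ (i - 1 - m) with hSdef
  set V : Matrix (Fin j × Fin s) (Fin s) ℂ :=
    ∑ i ∈ Finset.range (j + 1), S i * W * Λ.coeff i with hV
  have hcomm : Commute (z • (1 : Matrix (Fin j × Fin s) (Fin j × Fin s) ℂ)) H := by
    unfold Commute SemiconjBy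
    rw [smul_mul_assoc, one_mul, mul_smul_comm, mul_one]
  -- Step A : M * S i = z^i • 1 - H^i
  have hMS : ∀ i : ℕ, M * S i = z ^ i • 1 - H ^ i := by
    intro i
    have h1 : S i = ∑ m ∈ Finset.range i,
        (z • (1 : Matrix (Fin j × Fin s) (Fin j × Fin s) ℂ)) ^ m * H ^ (i - 1 - m) := by
      apply Finset.sum_congr rfl
      intro m _
      rw [_root_.smul_pow, one_pow, smul_mul_assoc, one_mul]
    rw [h1, hM, hcomm.mul_geom_sum₂ i, _root_.smul_pow, one_pow]
  -- Step B : M * V = W * evalS Λ z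
  have hMV : M * V = W * evalS Λ z := by
    have he : evalS Λ z = ∑ i ∈ Finset.range (j + 1), z ^ i • Λ.coeff i := by
      rw [evalS, hdeg]
    have ha : (∑ i ∈ Finset.range (j + 1), H ^ i * W * Λ.coeff i) = 0 := by
      unfold act at hann
      rw [hdeg] at hann
      exact hann
    rw [hV, Matrix.mul_sum, he, Matrix.mul_sum]
    have hcong : ∀ i ∈ Finset.range (j + 1),
        M * (S i * W * Λ.coeff i)
          = z ^ i • (W * Λ.coeff i) - H ^ i * W * Λ.coeff i := by
      intro i _
      rw [← Matrix.mul_assoc, ← Matrix.mul_assoc, hMS i, Matrix.sub_mul, Matrix.sub_mul,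
        Matrix.smul_mul, Matrix.smul_mul, Matrix.one_mul]
    rw [Finset.sum_congr rfl hcong, Finset.sum_sub_distrib, ha, sub_zero]
    apply Finset.sum_congr rfl
    intro i _
    rw [Matrix.mul_smul]
  -- Step C : Ejᴴ * V = Gprod H (j-1) * RB
  have hEV : Ejᴴ * V = Gprod H (j - 1) * RB := by
    have hterm : ∀ i ∈ Finset.range (j + 1),
        Ejᴴ * (S i * W * Λ.coeff i)
          = if i = j then Gprod H (j - 1) * RB * Λ.coeff i else 0 := by
      intro i hi
      have hi' : i ≤ j := by
        have := Finset.mem_range.mp hi; omega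
      have hES : Ejᴴ * S i * E0
          = ∑ m ∈ Finset.range i,
              z ^ m • blk (H ^ (i - 1 - m)) ⟨j - 1, by omega⟩ ⟨0, hj⟩ := by
        simp only [hSdef]
      
        rw [Matrix.mul_sum, Matrix.sum_mul]
        apply Finset.sum_congr rfl
        intro m _
        rw [Matrix.mul_smul, Matrix.smul_mul, hEj, hE0, blkE_conjT_mul_mul]
      have hmain : Ejᴴ * S i * E0 = if i = j then Gprod H (j - 1) else 0 := by
        rw [hES]
        by_cases hij : i = j
        · rw [if_pos hij, hij, Finset.sum_eq_single 0]
          · rw [pow_zero, one_smul, Nat.sub_zero, blk_pow_diag hH (j - 1) (by omega)]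
          · intro m hm hm0
            have hmlt : m < j := Finset.mem_range.mp hm
            have h0 : ((⟨0, hj⟩ : Fin j) : ℕ) + (j - 1 - m)
                < ((⟨j - 1, by omega⟩ : Fin j) : ℕ) := by simp; omega
            rw [buh_pow_blk_eq_zero hH _ _ _ h0, smul_zero]
          · intro h
            exact absurd (Finset.mem_range.mpr (by omega)) h
        · rw [if_neg hij]
          apply Finset.sum_eq_zero
          intro m hm
          have hmlt : m < i := Finset.mem_range.mp hm
          have h0 : ((⟨0, hj⟩ : Fin j) : ℕ) + (i - 1 - m)
              < ((⟨j - 1, by omega⟩ : Fin j) : ℕ) := by simp; omega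
          rw [buh_pow_blk_eq_zero hH _ _ _ h0, smul_zero]
      have hassoc : Ejᴴ * (S i * W * Λ.coeff i)
          = (Ejᴴ * S i * E0) * (RB * Λ.coeff i) := by
        rw [hW]
        simp only [Matrix.mul_assoc]
      rw [hassoc, hmain]
      by_cases hij : i = j
      · simp [hij, Matrix.mul_assoc]
      · simp [hij]
    rw [hV, Matrix.mul_sum, Finset.sum_congr rfl hterm,
      Finset.sum_ite_eq' (Finset.range (j + 1)) j
        (fun i => Gprod H (j - 1) * RB * Λ.coeff i),
      if_pos (Finset.mem_range.mpr (by omega))]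
    have : Λ.coeff j = 1 := by
      rw [← hdeg]; exact hmonic.coeff_natDegree
    rw [this, mul_one]
  -- assemble
  have hdet : IsUnit M.det := Ne.isUnit hz
  have hMinv : M⁻¹ * M = 1 := Matrix.nonsing_inv_mul M hdet
  have key : Ejᴴ * (M⁻¹ * (E0 * (RB * evalS Λ z))) = Gprod H (j - 1) * RB := by
    have h1 : E0 * (RB * evalS Λ z) = M * V := by
      rw [hMV, hW, Matrix.mul_assoc]
    rw [h1, ← Matrix.mul_assoc M⁻¹ M V, hMinv, Matrix.one_mul, hEV]
  apply Matrix.inv_eq_left_inv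
  change RB⁻¹ * ((List.range (j - 1)).map (fun m => (Gam H (m + 2))⁻¹)).prod *
    (Ejᴴ * M⁻¹ * E0) * RB * evalS Λ z = 1
  simp only [Matrix.mul_assoc]
  rw [key, ← Matrix.mul_assoc _ (Gprod H (j - 1)) RB,
    Pk_mul_Gprod hinv (j - 1) (by omega), Matrix.one_mul,
    Matrix.nonsing_inv_mul RB ((Matrix.isUnit_iff_isUnit_det RB).mp hRB)]
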